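/- arXiv:0708.0315 — 8 statements merged into one kernel-verified Lean document; each statement's English description precedes it below -/
import Mathlib

section
/- The 2×2 matrix A(η) with entries A₁₁ = (τ-μ)η₁² + μ, A₁₂ = A₂₁ = (λ+μ)η₁η₂, A₂₂ = (τ-μ)η₂² + μ is positive definite for all unit vectors η ∈ ℝ² if and only if μ > 0, τ > 0, and (τ-λ)(τ+λ+2μ) > 0. -/
open Matrix

theorem cubic_posdef (lam mu tau : ℝ) :
    (∀ eta1 eta2 : ℝ, eta1^2 + eta2^2 = 1 →
      (!![(tau-mu)*eta1^2 + mu, (lam+mu)*eta1*eta2;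
          (lam+mu)*eta1*eta2, (tau-mu)*eta2^2 + mu] : Matrix (Fin 2) (Fin 2) ℝ).PosDef)
    ↔ (mu > 0 ∧ tau > 0 ∧ (tau - lam) * (tau + lam + 2*mu) > 0) := by
  constructor
  · intro h
    have h1 := h 1 0 (by norm_num)
    have hmu : mu > 0 := by
      have := (Matrix.posDef_iff_dotProduct_mulVec.mp h1).2 (x := ![(0:ℝ),1]) (by
        intro hx
        simpa using congrFun hx 1)
      simpa [Matrix.mulVec, dotProduct, Fin.sum_univ_two] using this
    have htau : tau > 0 := by
      have h2 := (Matrix.posDef_iff_dotProduct_mulVec.mp h1).2 (x := ![(1:ℝ),0]) (by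
        intro hx
        simpa using congrFun hx 0)
      simp [Matrix.mulVec, dotProduct, Fin.sum_univ_two] at h2
      linarith
    refine ⟨hmu, htau, ?_⟩
    have e : (Real.sqrt 2 / 2) * (Real.sqrt 2 / 2) = 1/2 := by
      rw [div_mul_div_comm, Real.mul_self_sqrt (by norm_num)]
      norm_num
    have e2 : (Real.sqrt 2 / 2)^2 = 1/2 := by rw [sq]; exact e
    have h2 := (h (Real.sqrt 2 / 2) (Real.sqrt 2 / 2) (by rw [e2]; norm_num)).det_pos
    rw [Matrix.det_fin_two_of] at h2
    have eK : (lam+mu)*(Real.sqrt 2/2)*(Real.sqrt 2/2) = (lam+mu)*(1/2) := by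
      rw [mul_assoc, e]
    rw [e2, eK] at h2
    nlinarith [h2]
  · rintro ⟨hmu, htau, hD⟩ eta1 eta2 heta
    have hdet : ((tau-mu)*eta1^2+mu)*((tau-mu)*eta2^2+mu) - ((lam+mu)*eta1*eta2)^2
        = tau*mu*(eta1^2-eta2^2)^2 + eta1^2*eta2^2*((tau-lam)*(tau+lam+2*mu)) := by
      linear_combination (-(mu*(tau*(eta1^2+eta2^2)+mu))) * heta
    have hA11 : 0 < (tau-mu)*eta1^2 + mu := by
      rcases le_total tau mu with hc | hc
      · nlinarith [sq_nonneg eta1, sq_nonneg eta2]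
      · nlinarith [sq_nonneg eta1]
    have hdetpos : 0 < ((tau-mu)*eta1^2+mu)*((tau-mu)*eta2^2+mu) - ((lam+mu)*eta1*eta2)^2 := by
      rw [hdet]
      have h1 : (eta1^2-eta2^2)^2 + 4*(eta1^2*eta2^2) = 1 := by
        linear_combination (eta1^2+eta2^2+1)*heta
      rcases eq_or_ne (eta1*eta2) 0 with h0 | h0
      · have ht : eta1^2*eta2^2 = 0 := by
          have : (eta1*eta2)^2 = 0 := by rw [h0]; ring
          linear_combination this
        have hs1 : (eta1^2-eta2^2)^2 = 1 := by linarith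
        nlinarith [mul_pos htau hmu, hD, hs1, ht]
      · have ht : 0 < (eta1*eta2)^2 := by positivity
        nlinarith [mul_nonneg (mul_pos htau hmu).le (sq_nonneg (eta1^2-eta2^2)), mul_pos hD ht]
    refine Matrix.posDef_iff_dotProduct_mulVec.mpr ⟨?_, ?_⟩
    · unfold Matrix.IsHermitian
      ext i j
      fin_cases i <;> fin_cases j <;> simp [Matrix.conjTranspose_apply]
    · intro x hx
      have hab : x 0 ≠ 0 ∨ x 1 ≠ 0 := by
        by_contra hc
        push_neg at hc
        exact hx (by ext i; fin_cases i <;> simp [hc.1, hc.2])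
      simp [Matrix.mulVec, dotProduct, Fin.sum_univ_two]
      rcases eq_or_ne (x 1) 0 with hb | hb
      · have ha : x 0 ≠ 0 := hab.resolve_right (fun h => h hb)
        have ha2 : 0 < x 0 ^ 2 := by positivity
        rw [hb]
        nlinarith [mul_pos hA11 ha2]
      · have hb2 : 0 < x 1 ^ 2 := by positivity
        nlinarith [sq_nonneg (((tau-mu)*eta1^2+mu) * x 0 + (lam+mu)*eta1*eta2 * x 1),
          mul_pos hdetpos hb2, hA11]
end

section
/- For a cubic medium, the matrix A(η) has a repeated eigenvalue for some unit vector η if and only if (λ+μ)(τ-μ) = 0. -/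
open Matrix

theorem cubic_repeated_eigenvalue (lam mu tau : ℝ) :
    (∃ eta1 eta2 : ℝ, eta1^2 + eta2^2 = 1 ∧ ∃ c : ℝ,
      (!![(tau-mu)*eta1^2 + mu, (lam+mu)*eta1*eta2;
          (lam+mu)*eta1*eta2, (tau-mu)*eta2^2 + mu] : Matrix (Fin 2) (Fin 2) ℝ)
        = c • (1 : Matrix (Fin 2) (Fin 2) ℝ))
    ↔ (lam + mu) * (tau - mu) = 0 := by
  constructor
  · rintro ⟨e1, e2, hnorm, c, h⟩
    have h01 : (lam+mu)*e1*e2 = 0 := by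
      have := congrFun (congrFun h 0) 1
      simpa using this
    have h00 : (tau-mu)*e1^2 + mu = c := by
      have := congrFun (congrFun h 0) 0
      simpa using this
    have h11 : (tau-mu)*e2^2 + mu = c := by
      have := congrFun (congrFun h 1) 1
      simpa using this
    have hdiag : (tau-mu)*(e1^2 - e2^2) = 0 := by nlinarith [h00, h11]
    rcases mul_eq_zero.1 h01 with h | h
    · rcases mul_eq_zero.1 h with h | h
      · rw [h]; ring
      · have : tau - mu = 0 := by
          linear_combination -hdiag - (tau-mu)*hnorm + 2*(tau-mu)*e1*h
        rw [this]; ring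
    · have : tau - mu = 0 := by
        linear_combination hdiag - (tau-mu)*hnorm + 2*(tau-mu)*e2*h
      rw [this]; ring
  · intro h
    rcases mul_eq_zero.1 h with h | h
    · have h2 : Real.sqrt 2 ^ 2 = 2 := Real.sq_sqrt (by norm_num)
      refine ⟨Real.sqrt 2 / 2, Real.sqrt 2 / 2, by linear_combination h2/2,
        (tau-mu)/2 + mu, ?_⟩
      ext i j
      fin_cases i <;> fin_cases j <;> simp [Matrix.one_apply, h] <;>
        linear_combination (tau-mu)/4*h2
    · refine ⟨1, 0, by norm_num, mu, ?_⟩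
      ext i j
      fin_cases i <;> fin_cases j <;> simp [Matrix.one_apply, h]
end

section
/- For a cubic medium with τ ≠ λ+2μ, the unit direction η = (cos φ, sin φ) satisfies η^⊥ · A(η) η = 0 if and only if sin(4φ) = 0, i.e. φ = kπ/4 for some integer k; in particular there are exactly eight hyperbolic directions on the unit circle. -/
open Matrix Real

theorem cubic_hyperbolic_directions (lam mu tau : ℝ) (hne : tau ≠ lam + 2*mu) :
    (∀ phi : ℝ,
      ((![-Real.sin phi, Real.cos phi] ⬝ᵥ
        (!![(tau-mu)*(Real.cos phi)^2 + mu, (lam+mu)*(Real.cos phi)*(Real.sin phi);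
            (lam+mu)*(Real.cos phi)*(Real.sin phi), (tau-mu)*(Real.sin phi)^2 + mu]
          : Matrix (Fin 2) (Fin 2) ℝ).mulVec ![Real.cos phi, Real.sin phi]) = 0)
      ↔ Real.sin (4*phi) = 0) ∧
    (∀ phi : ℝ, Real.sin (4*phi) = 0 ↔ ∃ k : ℤ, phi = k * π / 4) ∧
    ({phi : ℝ | phi ∈ Set.Ico 0 (2*π) ∧ Real.sin (4*phi) = 0}.ncard = 8) := by
  refine ⟨?_, ?_, ?_⟩
  · intro phi
    have hsin4 : Real.sin (4*phi) = 2 * (2 * Real.sin phi * Real.cos phi) * (2 * (Real.cos phi)^2 - 1) := by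
      have h4 : (4:ℝ)*phi = 2*(2*phi) := by ring
      rw [h4, Real.sin_two_mul, Real.sin_two_mul, Real.cos_two_mul]
    have hpy := Real.sin_sq_add_cos_sq phi
    have key : (![-Real.sin phi, Real.cos phi] ⬝ᵥ
        (!![(tau-mu)*(Real.cos phi)^2 + mu, (lam+mu)*(Real.cos phi)*(Real.sin phi);
            (lam+mu)*(Real.cos phi)*(Real.sin phi), (tau-mu)*(Real.sin phi)^2 + mu]
          : Matrix (Fin 2) (Fin 2) ℝ).mulVec ![Real.cos phi, Real.sin phi])
        = (lam + 2*mu - tau)/4 * Real.sin (4*phi) := by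
      simp only [Matrix.mulVec, dotProduct, Fin.sum_univ_two, Matrix.cons_val_zero,
        Matrix.cons_val_one, Matrix.head_cons, Matrix.of_apply, Matrix.cons_val', Matrix.head_fin_const,
        Matrix.empty_val', Matrix.cons_val_fin_one]
      linear_combination ((tau - lam - 2*mu)/4) * hsin4 +
        ((tau - lam - 2*mu) * Real.sin phi * Real.cos phi) * hpy
    rw [key, mul_eq_zero]
    constructor
    · rintro (h | h)
      · exact absurd (by linarith [(div_eq_zero_iff.mp h).resolve_right (by norm_num)]) hne
      · exact h
    · intro h; exact Or.inr h
  · intro phi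
    rw [Real.sin_eq_zero_iff]
    constructor
    · rintro ⟨k, hk⟩; exact ⟨k, by linarith⟩
    · rintro ⟨k, hk⟩; exact ⟨k, by rw [hk]; ring⟩
  · have hπ := Real.pi_pos
    have hset : {phi : ℝ | phi ∈ Set.Ico 0 (2*π) ∧ Real.sin (4*phi) = 0}
        = ↑((Finset.range 8).image (fun k : ℕ => (k : ℝ) * π / 4)) := by
      ext x
      simp only [Set.mem_setOf_eq, Set.mem_Ico, Finset.coe_image, Set.mem_image,
        Finset.mem_coe, Finset.mem_range]
      constructor
      · rintro ⟨⟨h0, h2⟩, hs⟩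
        rw [Real.sin_eq_zero_iff] at hs
        obtain ⟨k, hk⟩ := hs
        have hx : x = k * π / 4 := by linarith
        have hk0 : 0 ≤ k := by
          have : (0:ℝ) ≤ (k:ℝ) := by nlinarith
          exact_mod_cast this
        have hk8 : k < 8 := by
          have : (k:ℝ) < 8 := by nlinarith
          exact_mod_cast this
        refine ⟨k.toNat, ?_, ?_⟩
        · omega
        · have hc : ((k.toNat : ℕ) : ℝ) = (k:ℝ) := by
            exact_mod_cast Int.toNat_of_nonneg hk0
          rw [hx, hc]
      · rintro ⟨k, hk8, rfl⟩
        have hk8' : (k:ℝ) < 8 := by exact_mod_cast hk8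
        refine ⟨⟨by positivity, by nlinarith⟩, ?_⟩
        rw [Real.sin_eq_zero_iff]
        exact ⟨k, by push_cast; ring⟩
    rw [hset, Set.ncard_coe_finset]
    rw [Finset.card_image_of_injOn, Finset.card_range]
    intro a _ b _ hab
    field_simp at hab
    exact_mod_cast hab
end

section
/- The rhombic-medium matrix A(η) with entries A₁₁ = (τ₁-μ)η₁² + μ, A₁₂ = A₂₁ = (λ+μ)η₁η₂, A₂₂ = (τ₂-μ)η₂² + μ is positive definite for all unit vectors η if and only if μ > 0, τ₁ > 0, τ₂ > 0, and (√(τ₁τ₂) - λ)(√(τ₁τ₂) + λ + 2μ) > 0. -/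
open Matrix
set_option maxHeartbeats 1000000

lemma posdef_fin_two (a b d : ℝ) :
    (!![a,b;b,d] : Matrix (Fin 2) (Fin 2) ℝ).PosDef ↔ 0 < a ∧ 0 < a*d - b*b := by
  constructor
  · intro h
    have h1 := (posDef_iff_dotProduct_mulVec.1 h).2 (x := ![1,0]) (fun hc => by simpa using congrFun hc 0)
    have h2 := h.det_pos
    rw [Matrix.det_fin_two_of] at h2
    simp [dotProduct, mulVec, Fin.sum_univ_two] at h1
    constructor
    · linarith
    · nlinarith
  · rintro ⟨ha, hd⟩
    refine posDef_iff_dotProduct_mulVec.2 ⟨?_, ?_⟩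
    · rw [Matrix.IsHermitian]
      ext i j
      fin_cases i <;> fin_cases j <;> simp
    · intro x hx
      simp [dotProduct, mulVec, Fin.sum_univ_two]
      by_cases h1 : x 1 = 0
      · have h0 : x 0 ≠ 0 := by
          intro h0; apply hx; ext i; fin_cases i <;> simp [h0, h1]
        rw [h1]
        nlinarith [mul_pos ha (mul_self_pos.2 h0)]
      · nlinarith [sq_nonneg (a * x 0 + b * x 1), mul_pos hd (mul_self_pos.2 h1)]

theorem rhombic_posdef (lam mu tau1 tau2 : ℝ) :
    (∀ eta1 eta2 : ℝ, eta1^2 + eta2^2 = 1 →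
      (!![(tau1-mu)*eta1^2 + mu, (lam+mu)*eta1*eta2;
          (lam+mu)*eta1*eta2, (tau2-mu)*eta2^2 + mu] : Matrix (Fin 2) (Fin 2) ℝ).PosDef)
    ↔ (mu > 0 ∧ tau1 > 0 ∧ tau2 > 0 ∧
        (Real.sqrt (tau1*tau2) - lam) * (Real.sqrt (tau1*tau2) + lam + 2*mu) > 0) := by
  constructor
  · intro H
    have h1 := (posdef_fin_two _ _ _).1 (H 1 0 (by norm_num))
    have h2 := (posdef_fin_two _ _ _).1 (H 0 1 (by norm_num))
    have ht1 : 0 < tau1 := by nlinarith [h1.1]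
    have ht2 : 0 < tau2 := by nlinarith [h2.1]
    have hmu : 0 < mu := by nlinarith [h1.1, h1.2]
    refine ⟨hmu, ht1, ht2, ?_⟩
    rw [Real.sqrt_mul ht1.le]
    set p := Real.sqrt tau1 with hpdef
    set q := Real.sqrt tau2 with hqdef
    have hp : p^2 = tau1 := Real.sq_sqrt ht1.le
    have hq : q^2 = tau2 := Real.sq_sqrt ht2.le
    have hp0 : 0 < p := Real.sqrt_pos.2 ht1
    have hq0 : 0 < q := Real.sqrt_pos.2 ht2
    have hpq : 0 < p + q := by linarith
    set e1 := Real.sqrt (q/(p+q)) with he1def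
    set e2 := Real.sqrt (p/(p+q)) with he2def
    have he1 : e1^2 = q/(p+q) := Real.sq_sqrt (by positivity)
    have he2 : e2^2 = p/(p+q) := Real.sq_sqrt (by positivity)
    clear_value e1 e2
    have hsum : e1^2 + e2^2 = 1 := by
      rw [he1, he2]; field_simp; ring
    have hdet := ((posdef_fin_two _ _ _).1 (H e1 e2 hsum)).2
    have hb : ((lam+mu)*e1*e2)*((lam+mu)*e1*e2) = (lam+mu)^2*(e1^2*e2^2) := by ring
    rw [hb, he1, he2, ← hp, ← hq] at hdet
    have h3 : (((p^2-mu)*(q/(p+q))+mu)*((q^2-mu)*(p/(p+q))+mu)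
        - (lam+mu)^2*(q/(p+q)*(p/(p+q)))) * (p+q)^2
        = (p*q)*((p*q-lam)*(p*q+lam+2*mu)) := by
      field_simp
      ring
    have h4 := mul_pos hdet (by positivity : (0:ℝ) < (p+q)^2)
    rw [h3] at h4
    nlinarith [mul_pos hp0 hq0]
  · rintro ⟨hmu, ht1, ht2, hK⟩
    intro e1 e2 hsum
    rw [Real.sqrt_mul ht1.le] at hK
    set p := Real.sqrt tau1 with hpdef
    set q := Real.sqrt tau2 with hqdef
    have hp : p^2 = tau1 := Real.sq_sqrt ht1.le
    have hq : q^2 = tau2 := Real.sq_sqrt ht2.le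
    clear_value p q
    rw [posdef_fin_two]
    constructor
    · by_cases he : e1 = 0
      · subst he; nlinarith
      · have h1 : 0 < e1^2 := by positivity
        nlinarith [mul_nonneg hmu.le (sq_nonneg e2)]
    · have key : ((tau1-mu)*e1^2+mu)*((tau2-mu)*e2^2+mu)
          - ((lam+mu)*e1*e2)*((lam+mu)*e1*e2)
          = mu*(p*e1^2 - q*e2^2)^2 + ((p*q-lam)*(p*q+lam+2*mu))*(e1^2*e2^2) := by
        rw [← hp, ← hq]
        linear_combination (-(mu*p^2*e1^2 + mu*q^2*e2^2 + mu^2))*hsum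
      rw [key]
      by_cases h1 : e1 = 0
      · subst h1
        have h2 : e2^2 = 1 := by linarith [hsum]
        have h4 : mu*q^2*e2^4 = mu*tau2 := by
          rw [← hq]; linear_combination (mu*q^2*(e2^2+1))*h2
        nlinarith [h4, mul_pos hmu ht2]
      · by_cases h2 : e2 = 0
        · subst h2
          have h1' : e1^2 = 1 := by linarith [hsum]
          have h4 : mu*p^2*e1^4 = mu*tau1 := by
            rw [← hp]; linear_combination (mu*p^2*(e1^2+1))*h1'
          nlinarith [h4, mul_pos hmu ht1]
        · have he1 : 0 < e1^2 := by positivity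
          have he2 : 0 < e2^2 := by positivity
          nlinarith [mul_pos hK (mul_pos he1 he2),
            mul_nonneg hmu.le (sq_nonneg (p*e1^2 - q*e2^2))]
end

section
/- For a rhombic medium with hyperbolic direction η = (cos φ, sin φ) (i.e. η and η^⊥ are eigenvectors of A(η)), the eigenvalue of A(η) for the eigenvector η is (τ₁-2μ-λ)cos²φ + λ + 2μ and the eigenvalue for η^⊥ is (τ₁-2μ-λ)cos²φ + μ whenever sin φ ≠ 0 and (τ₁-τ₂) + (τ₁+τ₂-2λ-4μ)cos 2φ = 0; in particular the difference of the two eigenvalues is λ + μ. -/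
open Matrix

theorem rhombic_eigenvalues (lam mu tau1 tau2 phi : ℝ)
    (hs : Real.sin phi ≠ 0)
    (hcond : (tau1-tau2) + (tau1+tau2-2*lam-4*mu)*Real.cos (2*phi) = 0)
    (A : Matrix (Fin 2) (Fin 2) ℝ)
    (hA : A = !![(tau1-mu)*(Real.cos phi)^2 + mu, (lam+mu)*(Real.cos phi)*(Real.sin phi);
                 (lam+mu)*(Real.cos phi)*(Real.sin phi), (tau2-mu)*(Real.sin phi)^2 + mu]) :
    A.mulVec ![Real.cos phi, Real.sin phi]
      = ((tau1-2*mu-lam)*(Real.cos phi)^2 + lam + 2*mu) • ![Real.cos phi, Real.sin phi] ∧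
    A.mulVec ![-Real.sin phi, Real.cos phi]
      = ((tau1-2*mu-lam)*(Real.cos phi)^2 + mu) • ![-Real.sin phi, Real.cos phi] ∧
    ((tau1-2*mu-lam)*(Real.cos phi)^2 + lam + 2*mu)
      - ((tau1-2*mu-lam)*(Real.cos phi)^2 + mu) = lam + mu := by
  subst hA
  set c := Real.cos phi
  set s := Real.sin phi
  have hpy : s^2 + c^2 = 1 := Real.sin_sq_add_cos_sq phi
  rw [Real.cos_two_mul] at hcond
  have hK : (tau1+tau2-2*lam-4*mu)*c^2 = tau2-lam-2*mu := by linarith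
  refine ⟨?_, ?_, by ring⟩ <;> funext i <;> fin_cases i <;>
      simp [Matrix.mulVec, dotProduct, Fin.sum_univ_two]
  · linear_combination (lam+mu)*c*hpy
  · linear_combination (tau2-mu)*s*hpy - s*hK
  · ring
  · linear_combination (tau2-2*mu-lam)*c*hpy - c*hK
end

section
/- For the rhombic medium with τ₁ = λ+2μ, the smallest eigenvalue κ₁(φ) of A((cos φ, sin φ)) satisfies κ₁(φ) = μ + (τ₂ - λ - 2μ)φ² + O(φ³) as φ → 0, provided λ + μ > 0 and μ < λ + 2μ is the eigenvalue branch through μ at φ=0. -/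
open Matrix Asymptotics Filter

theorem rhombic_eigenvalue_expansion (lam mu tau2 : ℝ) (hmu : mu > 0) (hlm : lam + mu > 0)
    (A : ℝ → Matrix (Fin 2) (Fin 2) ℝ)
    (hA : ∀ phi, A phi =
      !![(lam+mu)*(Real.cos phi)^2 + mu, (lam+mu)*(Real.cos phi)*(Real.sin phi);
         (lam+mu)*(Real.cos phi)*(Real.sin phi), (tau2-mu)*(Real.sin phi)^2 + mu])
    (kappa : ℝ → ℝ) (hcont : Continuous kappa) (hk0 : kappa 0 = mu)
    (heig : ∀ phi, (A phi - kappa phi • (1 : Matrix (Fin 2) (Fin 2) ℝ)).det = 0) :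
    (fun phi => kappa phi - (mu + (tau2 - lam - 2*mu)*phi^2)) =O[nhds 0]
      (fun phi => phi^3) := by
  have key : ∀ phi, (kappa phi - ((lam+mu)*(Real.cos phi)^2 + mu)) *
      (kappa phi - ((tau2-mu)*(Real.sin phi)^2 + mu)) =
      ((lam+mu)*(Real.cos phi)*(Real.sin phi))^2 := by
    intro phi
    have h := heig phi
    rw [hA phi, Matrix.det_fin_two] at h
    simp [Matrix.sub_apply, Matrix.smul_apply, Matrix.one_apply] at h
    linear_combination h
  -- notation
  set K := tau2 - lam - 2*mu with hK
  -- numerator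
  set N : ℝ → ℝ := fun phi => ((lam+mu)*(Real.cos phi)*(Real.sin phi))^2
      - ((mu + K*phi^2) - ((lam+mu)*(Real.cos phi)^2 + mu))
        * ((mu + K*phi^2) - ((tau2-mu)*(Real.sin phi)^2 + mu)) with hN
  -- denominator
  set Den : ℝ → ℝ := fun phi => kappa phi + (mu + K*phi^2)
      - ((lam+mu)*(Real.cos phi)^2 + mu) - ((tau2-mu)*(Real.sin phi)^2 + mu) with hDen
  have id1 : ∀ phi, (kappa phi - (mu + K*phi^2)) * Den phi = N phi := by
    intro phi
    simp only [hDen, hN]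
    linear_combination key phi
  -- closed form of N
  set Br : ℝ → ℝ := fun phi => (-(lam+mu)^2 + (lam+mu)*(tau2-mu))*((Real.sin phi)^2 + phi^2)
      + ((lam+mu)^2 + K*phi^2*(tau2-mu) - (lam+mu)*(tau2-mu) - (lam+mu)*K*phi^2) with hBr
  have id2 : ∀ phi, N phi = (lam+mu)*K*phi^4 + ((Real.sin phi)^2 - phi^2) * Br phi := by
    intro phi
    simp only [hN, hBr, hK]
    linear_combination ((lam+mu)^2*(Real.sin phi)^2
      + (lam+mu)*((mu + (tau2-lam-2*mu)*phi^2) - ((tau2-mu)*(Real.sin phi)^2 + mu)))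
      * Real.sin_sq_add_cos_sq phi
  -- sin phi - phi = O(phi^3)
  have hsin3 : (fun phi => Real.sin phi - phi) =O[nhds 0] (fun phi : ℝ => phi^3) := by
    rw [isBigO_iff]
    refine ⟨1, ?_⟩
    filter_upwards [Metric.ball_mem_nhds (0:ℝ) one_pos] with x hx
    have hx1 : |x| ≤ 1 := by
      rw [Metric.mem_ball, Real.dist_eq, sub_zero] at hx
      exact hx.le
    have hb := Real.sin_bound hx1
    have h4 : |x|^4 ≤ |x|^3 := by
      calc |x|^4 = |x|^3 * |x| := by ring
      _ ≤ |x|^3 * 1 := mul_le_mul_of_nonneg_left hx1 (pow_nonneg (abs_nonneg x) 3)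
      _ = |x|^3 := by ring
    have : |Real.sin x - x| ≤ |Real.sin x - (x - x^3/6)| + |x^3/6| := by
      have : Real.sin x - x = (Real.sin x - (x - x^3/6)) + (-(x^3/6)) := by ring
      rw [this]
      exact (abs_add_le _ _).trans (by rw [abs_neg])
    rw [Real.norm_eq_abs, Real.norm_eq_abs, one_mul]
    have hx3 : |x^3/6| = |x|^3/6 := by rw [abs_div, abs_pow]; norm_num
    calc |Real.sin x - x| ≤ |x|^4 * (5/96) + |x|^3/6 := by
          rw [← hx3]; exact this.trans (by nlinarith [mul_le_mul_of_nonneg_left hx1 (pow_nonneg (abs_nonneg x) 4), pow_nonneg (abs_nonneg x) 4])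
      _ ≤ |x|^3 * (5/96) + |x|^3/6 := by nlinarith [pow_nonneg (abs_nonneg x) 3]
      _ ≤ |x|^3 := by nlinarith [pow_nonneg (abs_nonneg x) 3]
      _ = |x^3| := (abs_pow x 3).symm
  -- sin^2 - phi^2 = O(phi^4)
  have hsinsq : (fun phi => (Real.sin phi)^2 - phi^2) =O[nhds 0] (fun phi : ℝ => phi^4) := by
    have heq : (fun phi => (Real.sin phi)^2 - phi^2)
        = fun phi => (Real.sin phi - phi) * (Real.sin phi + phi) := by
      funext phi; ring
    have h2 : (fun phi : ℝ => Real.sin phi + phi) =O[nhds 0] (fun phi : ℝ => phi) := by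
      rw [isBigO_iff]
      refine ⟨2, Eventually.of_forall fun x => ?_⟩
      rw [Real.norm_eq_abs, Real.norm_eq_abs]
      calc |Real.sin x + x| ≤ |Real.sin x| + |x| := abs_add_le _ _
        _ ≤ |x| + |x| := by linarith [Real.abs_sin_le_abs (x := x)]
        _ = 2 * |x| := by ring
    rw [heq]
    have := hsin3.mul h2
    simpa [← pow_succ] using this
  -- N = O(phi^4)
  have hBrO : Br =O[nhds 0] (fun _ : ℝ => (1:ℝ)) := by
    have hc : Continuous Br := by
      simp only [hBr]; fun_prop
    exact (hc.tendsto 0).isBigO_one ℝ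
  have hNO : N =O[nhds 0] (fun phi : ℝ => phi^4) := by
    have heq : N = fun phi => (lam+mu)*K*phi^4 + ((Real.sin phi)^2 - phi^2) * Br phi :=
      funext id2
    rw [heq]
    refine IsBigO.add ?_ ?_
    · exact (isBigO_refl (fun phi : ℝ => phi^4) (nhds 0)).const_mul_left _
    · simpa using hsinsq.mul hBrO
  -- denominator bounded below
  have hDcont : Continuous Den := by
    simp only [hDen]; fun_prop
  have hD0 : Den 0 = -(lam+mu) := by
    simp [hDen, hk0]; ring
  have hDev : ∀ᶠ phi in nhds 0, (lam+mu)/2 ≤ |Den phi| := by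
    have ht : Tendsto (fun phi => |Den phi|) (nhds 0) (nhds |Den 0|) :=
      (hDcont.abs).continuousAt
    have hv : |Den 0| = lam + mu := by rw [hD0, abs_neg, abs_of_pos hlm]
    rw [hv] at ht
    exact ht.eventually (eventually_ge_nhds (by linarith))
  -- kappa - g = O(N)
  have hkg : (fun phi => kappa phi - (mu + K*phi^2)) =O[nhds 0] N := by
    rw [isBigO_iff]
    refine ⟨2/(lam+mu), ?_⟩
    filter_upwards [hDev] with x hx
    have h1 := id1 x
    rw [Real.norm_eq_abs, Real.norm_eq_abs, ← h1, abs_mul]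
    have h0 : (0:ℝ) < (lam+mu)/2 := by linarith
    have hd : 0 < |Den x| := lt_of_lt_of_le h0 hx
    rw [div_mul_eq_mul_div, le_div_iff₀ hlm]
    nlinarith [abs_nonneg (kappa x - (mu + K*x^2))]
  -- phi^4 = O(phi^3)
  have h43 : (fun phi : ℝ => phi^4) =O[nhds 0] (fun phi : ℝ => phi^3) := by
    rw [isBigO_iff]
    refine ⟨1, ?_⟩
    filter_upwards [Metric.ball_mem_nhds (0:ℝ) one_pos] with x hx
    have hx1 : |x| ≤ 1 := by
      rw [Metric.mem_ball, Real.dist_eq, sub_zero] at hx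
      exact hx.le
    rw [Real.norm_eq_abs, Real.norm_eq_abs, abs_pow, abs_pow, one_mul]
    calc |x|^4 = |x|^3 * |x| := by ring
      _ ≤ |x|^3 * 1 := mul_le_mul_of_nonneg_left hx1 (pow_nonneg (abs_nonneg x) 3)
      _ = |x|^3 := by ring
  exact (hkg.trans hNO).trans h43
end

section
/- For the exceptional medium, the determinant of A((cos φ, sin φ)) equals (μ/8)(13μ + 8λ + 4μ cos 2φ - μ cos 4φ + 8μ sin 2φ + 4(λ+μ) sin 4φ); in particular, if λ > μ > 0 then det A(η) > 0 for all φ. -/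
open Matrix

theorem exceptional_det (lam mu : ℝ) :
    (∀ phi : ℝ,
      (!![(lam+mu)*(Real.cos phi)^2 + mu,
          (lam+mu)*(Real.cos phi)*(Real.sin phi) + mu*(Real.sin phi)^2;
          (lam+mu)*(Real.cos phi)*(Real.sin phi) + mu*(Real.sin phi)^2,
          (lam+mu)*(Real.sin phi)^2 + mu + 2*mu*(Real.cos phi)*(Real.sin phi)]
        : Matrix (Fin 2) (Fin 2) ℝ).det
      = (mu/8)*(13*mu + 8*lam + 4*mu*Real.cos (2*phi) - mu*Real.cos (4*phi)
          + 8*mu*Real.sin (2*phi) + 4*(lam+mu)*Real.sin (4*phi))) ∧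
    (lam > mu → mu > 0 → ∀ phi : ℝ,
      0 < (mu/8)*(13*mu + 8*lam + 4*mu*Real.cos (2*phi) - mu*Real.cos (4*phi)
          + 8*mu*Real.sin (2*phi) + 4*(lam+mu)*Real.sin (4*phi))) := by
  constructor
  · intro phi
    have h4 : (4:ℝ)*phi = 2*(2*phi) := by ring
    rw [Matrix.det_fin_two_of]
    simp only [h4, Real.cos_two_mul, Real.sin_two_mul]
    set s := Real.sin phi
    set c := Real.cos phi
    linear_combination (mu^2*c^2 - 2*mu^2*s*c - mu^2*s^2 + lam*mu - 2*lam*mu*s*c) *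
      (Real.sin_sq_add_cos_sq phi)
  · intro hlm hmu phi
    have hc2 := Real.neg_one_le_cos (2*phi)
    have hc4' := Real.cos_le_one (4*phi)
    have hs2 := Real.neg_one_le_sin (2*phi)
    have hs4 := Real.neg_one_le_sin (4*phi)
    have h1 : 0 ≤ mu * (1 + Real.cos (2*phi)) := by nlinarith
    have h2 : 0 ≤ mu * (1 - Real.cos (4*phi)) := by nlinarith
    have h3 : 0 ≤ mu * (1 + Real.sin (2*phi)) := by nlinarith
    have h5 : 0 ≤ (lam+mu) * (1 + Real.sin (4*phi)) := by nlinarith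
    have hE : 0 < 13*mu + 8*lam + 4*mu*Real.cos (2*phi) - mu*Real.cos (4*phi)
        + 8*mu*Real.sin (2*phi) + 4*(lam+mu)*Real.sin (4*phi) := by nlinarith
    have : (0:ℝ) < mu/8 := by linarith
    exact mul_pos this hE
end

section
/- For the exceptional medium with λ + μ > 0, the matrix A(η) has a repeated eigenvalue for some unit vector η if and only if λ = (√3 - 1)μ. -/
open Matrix

theorem exceptional_repeated_eigenvalue (lam mu : ℝ) (hmu : 0 < mu) (hlm : lam + mu > 0) :
    (∃ eta1 eta2 : ℝ, eta1^2 + eta2^2 = 1 ∧ ∃ c : ℝ,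
      (!![(lam+mu)*eta1^2 + mu, (lam+mu)*eta1*eta2 + mu*eta2^2;
          (lam+mu)*eta1*eta2 + mu*eta2^2, (lam+mu)*eta2^2 + mu + 2*mu*eta1*eta2]
        : Matrix (Fin 2) (Fin 2) ℝ) = c • (1 : Matrix (Fin 2) (Fin 2) ℝ))
    ↔ lam = (Real.sqrt 3 - 1)*mu := by
  have hs : Real.sqrt 3 ^ 2 = 3 := Real.sq_sqrt (by norm_num)
  have hs0 : (0:ℝ) ≤ Real.sqrt 3 := Real.sqrt_nonneg 3
  constructor
  · rintro ⟨e1, e2, hunit, c, hM⟩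
    have h00 := congrFun (congrFun hM 0) 0
    have h01 := congrFun (congrFun hM 0) 1
    have h11 := congrFun (congrFun hM 1) 1
    simp [Matrix.smul_apply, Matrix.one_apply] at h00 h01 h11
    have he2 : e2 ≠ 0 := by
      intro h0
      subst h0
      have h1 : e1 ^ 2 = 1 := by linarith [hunit]
      nlinarith [h00, h11]
    have hkey : (lam + mu) * e1 = - mu * e2 := by
      have := mul_left_cancel₀ he2 (by nlinarith [h01] : e2 * ((lam+mu)*e1 + mu*e2) = e2 * 0)
      linarith
    have hsq : (lam + mu) ^ 2 = 3 * mu ^ 2 := by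
      have hdiag : (lam+mu)*e1^2 = (lam+mu)*e2^2 + 2*mu*e1*e2 := by linarith [h00, h11]
      have he22 : e2 ^ 2 ≠ 0 := pow_ne_zero 2 he2
      have : ((lam+mu)^2 - 3*mu^2) * e2^2 = 0 := by nlinarith [hdiag, hkey]
      have := (mul_eq_zero.mp this).resolve_right he22
      linarith
    have hfac : (lam + mu - Real.sqrt 3 * mu) * (lam + mu + Real.sqrt 3 * mu) = 0 := by
      nlinarith [hsq, hs]
    have hpos : 0 < lam + mu + Real.sqrt 3 * mu := by positivity
    have := (mul_eq_zero.mp hfac).resolve_right (ne_of_gt hpos)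
    linarith
  · intro hlam
    refine ⟨-1/2, Real.sqrt 3 / 2, by nlinarith, Real.sqrt 3 * mu / 4 + mu, ?_⟩
    subst hlam
    ext i j
    fin_cases i <;> fin_cases j <;>
      simp [Matrix.smul_apply, Matrix.one_apply] <;> nlinarith [hs, hs0, hmu]
end
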